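/- Let $s=\{s_n\}_{n=1}^\infty\subset(0,1]$ be any sequence, and let $\widetilde{\varphi_s}:[0,1]\to[0,\infty)$ be a concave, non-decreasing function vanishing only at the origin with $\varphi_s\le\widetilde{\varphi_s}\le 2\varphi_s$ on $[0,1]$ (e.g. the least concave majorant of the quasi-concave function $\varphi_s$). Then $\Lambda_{\widetilde{\varphi_s}}$ embeds continuously into $QA_{\varphi,\psi}$: there exists a constant $C>0$ such that $\|f\|_{\varphi,\psi}\le C\,\|f\|_{\Lambda_{\widetilde{\varphi_s}}}$ for every $f\in\Lambda_{\widetilde{\varphi_s}}$. -/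

import Mathlib

open MeasureTheory ENNReal Set Filter Topology

noncomputable section

/-- Lebesgue measure restricted to the interval `[0,1]`. -/
def μ01 : Measure ℝ := volume.restrict (Set.Icc 0 1)

/-- `φ : [0,1] → [0,∞)` is concave, non-decreasing, and vanishes only at the origin. -/
structure IsPhi (φ : ℝ → ℝ) : Prop where
  concave : ConcaveOn ℝ (Set.Icc 0 1) φ
  mono : MonotoneOn φ (Set.Icc 0 1)
  zero : φ 0 = 0
  pos : ∀ t : ℝ, 0 < t → t ≤ 1 → 0 < φ t

/-- `ψ : [0,∞) → [0,∞)` is concave, non-decreasing, and vanishes only at the origin. -/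
structure IsPsi (ψ : ℝ → ℝ) : Prop where
  concave : ConcaveOn ℝ (Set.Ici 0) ψ
  mono : MonotoneOn ψ (Set.Ici 0)
  zero : ψ 0 = 0
  pos : ∀ t : ℝ, 0 < t → 0 < ψ t

/-- A sequence `g` of nonnegative `L^∞` functions with `|f| ≤ ∑ₙ gₙ` a.e. -/
def Admissible (f : ℝ → ℝ) (g : ℕ → ℝ → ℝ) : Prop :=
  (∀ n, AEMeasurable (g n) μ01) ∧
  (∀ n, eLpNorm (g n) ⊤ μ01 < ⊤) ∧
  (∀ n x, 0 ≤ g n x) ∧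
  (∀ᵐ x ∂μ01, ENNReal.ofReal |f x| ≤ ∑' n : ℕ, ENNReal.ofReal (g n x))

/-- The cost `∑ₙ ψ(n) ‖gₙ‖_∞ φ(‖gₙ‖₁/‖gₙ‖_∞)` of a decomposition (index shifted by 1;
`0/0 = 0` by the `ℝ≥0∞` division convention, and `φ 0 = 0`). -/
def seqCost (φ ψ : ℝ → ℝ) (g : ℕ → ℝ → ℝ) : ℝ≥0∞ :=
  ∑' n : ℕ, ENNReal.ofReal
    (ψ ((n : ℝ) + 1) * (eLpNorm (g n) ⊤ μ01).toReal *
      φ ((eLpNorm (g n) 1 μ01 / eLpNorm (g n) ⊤ μ01).toReal))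

/-- The quasi-norm `‖f‖_{φ,ψ}` (equal to `∞` when no admissible decomposition exists). -/
def QANorm (φ ψ : ℝ → ℝ) (f : ℝ → ℝ) : ℝ≥0∞ :=
  ⨅ (g : ℕ → ℝ → ℝ) (_ : Admissible f g), seqCost φ ψ g

/-- Membership in the space `QA_{φ,ψ}`. -/
def MemQA (φ ψ : ℝ → ℝ) (f : ℝ → ℝ) : Prop :=
  AEMeasurable f μ01 ∧ QANorm φ ψ f < ⊤

/-- The decreasing rearrangement `f*` of `f` on `[0,1]`. -/
def decRearr (f : ℝ → ℝ) (t : ℝ) : ℝ :=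
  sInf {s : ℝ | 0 ≤ s ∧ μ01 {x | s < |f x|} ≤ ENNReal.ofReal t}

/-- The limit `ζ(0⁺)` of a non-decreasing function `ζ` on `[0,1]`. -/
def limZero (ζ : ℝ → ℝ) : ℝ := sInf (ζ '' Set.Ioc 0 1)

/-- The Lorentz norm `‖f‖_{Λ_ζ} = ∫₀¹ f* dζ = ‖f‖_∞ ζ(0⁺) + ∫₀¹ f*(s) ζ'(s) ds`
(for `ζ` concave the derivative exists a.e. and `ζ` is absolutely continuous on `(0,1]`). -/
def lorentzNorm (ζ : ℝ → ℝ) (f : ℝ → ℝ) : ℝ≥0∞ :=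
  eLpNorm f ⊤ μ01 * ENNReal.ofReal (limZero ζ) +
    ∫⁻ s in Set.Ioc (0:ℝ) 1, ENNReal.ofReal (decRearr f s * deriv ζ s)

/-- Membership in the Lorentz space `Λ_ζ`. -/
def MemLorentz (ζ : ℝ → ℝ) (f : ℝ → ℝ) : Prop :=
  AEMeasurable f μ01 ∧ lorentzNorm ζ f < ⊤

/-- The quasi-concave function `φ_s(t) = inf_n max{sₙ,t} (φ(sₙ)/sₙ) ψ(n)` (index shifted by 1). -/
def phiSeq (φ ψ : ℝ → ℝ) (s : ℕ → ℝ) (t : ℝ) : ℝ :=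
  if t = 0 then 0 else ⨅ n : ℕ, max (s n) t * (φ (s n) / s n) * ψ ((n : ℝ) + 1)

/-- The function `τ(t) = φ(t) ψ(logbar(φ(t)/t))` with `logbar t = 1 + log⁺ t`. -/
def tauF (φ ψ : ℝ → ℝ) (t : ℝ) : ℝ :=
  if t = 0 then 0 else φ t * ψ (1 + max (Real.log (φ t / t)) 0)

namespace Aux

def p (k : ℕ) : ℝ := (2:ℝ)⁻¹ ^ k

lemma p_pos (k : ℕ) : 0 < p k := pow_pos (by norm_num) k
lemma p_le_one (k : ℕ) : p k ≤ 1 := pow_le_one₀ (by norm_num) (by norm_num)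
lemma p_anti {k l : ℕ} (h : k ≤ l) : p l ≤ p k :=
  pow_le_pow_of_le_one (by norm_num) (by norm_num) h
lemma p_succ (k : ℕ) : p (k+1) = p k / 2 := by rw [p, p, pow_succ]; ring
lemma p_mem (k : ℕ) : p k ∈ Set.Ioc (0:ℝ) 1 := ⟨p_pos k, p_le_one k⟩

instance : IsProbabilityMeasure μ01 := ⟨by
  rw [μ01, Measure.restrict_apply_univ, Real.volume_Icc]; norm_num⟩

def dSet (f : ℝ → ℝ) (t : ℝ) : Set ℝ :=
  {s : ℝ | 0 ≤ s ∧ μ01 {x | s < |f x|} ≤ ENNReal.ofReal t}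

lemma decRearr_eq (f : ℝ → ℝ) (t : ℝ) : decRearr f t = sInf (dSet f t) := rfl

lemma dSet_bddBelow {f : ℝ → ℝ} {t : ℝ} : BddBelow (dSet f t) := ⟨0, fun _ hx => hx.1⟩

lemma decRearr_nonneg (f : ℝ → ℝ) (t : ℝ) : 0 ≤ decRearr f t :=
  Real.sInf_nonneg fun _ hx => hx.1

lemma measSet {f : ℝ → ℝ} (hf : Measurable f) (c : ℝ) :
    MeasurableSet {x | c < |f x|} := measurableSet_lt measurable_const hf.abs

lemma dSet_nonempty {f : ℝ → ℝ} (hf : Measurable f) {t : ℝ} (ht : 0 < t) :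
    (dSet f t).Nonempty := by
  have h1 : Tendsto (fun n : ℕ => μ01 {x | (n:ℝ) < |f x|}) atTop
      (𝓝 (μ01 (⋂ n : ℕ, {x | (n:ℝ) < |f x|}))) := by
    exact tendsto_measure_iInter_atTop
      (fun n => (measSet hf _).nullMeasurableSet)
      (fun n m hnm => fun x hx => by
        simp only [mem_setOf_eq] at hx ⊢
        have hcast : (n:ℝ) ≤ (m:ℝ) := Nat.cast_le.mpr hnm
        linarith)
      ⟨0, measure_ne_top _ _⟩
  have h2 : (⋂ n : ℕ, {x : ℝ | (n:ℝ) < |f x|}) = ∅ := by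
    ext x
    simp only [mem_iInter, mem_setOf_eq, mem_empty_iff_false, iff_false, not_forall, not_lt]
    obtain ⟨n, hn⟩ := exists_nat_gt |f x|
    exact ⟨n, hn.le⟩
  rw [h2, measure_empty] at h1
  have h3 := h1.eventually_lt_const (ENNReal.ofReal_pos.mpr ht)
  obtain ⟨n, hn⟩ := h3.exists
  exact ⟨n, Nat.cast_nonneg n, hn.le⟩

lemma decRearr_anti {f : ℝ → ℝ} (hf : Measurable f) {t t' : ℝ} (ht : 0 < t) (h : t ≤ t') :
    decRearr f t' ≤ decRearr f t :=
  csInf_le_csInf dSet_bddBelow (dSet_nonempty hf ht)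
    (fun _ hx => ⟨hx.1, hx.2.trans (ENNReal.ofReal_le_ofReal h)⟩)

lemma measure_decRearr_lt {f : ℝ → ℝ} (hf : Measurable f) {t : ℝ} (ht : 0 < t) :
    μ01 {x | decRearr f t < |f x|} ≤ ENNReal.ofReal t := by
  have hne := dSet_nonempty hf ht
  set c := decRearr f t with hc
  have hU : {x | c < |f x|} = ⋃ m : ℕ, {x | c + ((m:ℝ)+1)⁻¹ < |f x|} := by
    ext x
    simp only [mem_setOf_eq, mem_iUnion]
    constructor
    · intro hx
      obtain ⟨m, hm⟩ := exists_nat_one_div_lt (sub_pos.mpr hx)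
      exact ⟨m, by rw [one_div] at hm; linarith⟩
    · rintro ⟨m, hm⟩
      have : (0:ℝ) < ((m:ℝ)+1)⁻¹ := by positivity
      linarith
  rw [hU]
  have hmono : Monotone (fun m : ℕ => {x | c + ((m:ℝ)+1)⁻¹ < |f x|}) := by
    intro m m' hmm x hx
    have : ((m':ℝ)+1)⁻¹ ≤ ((m:ℝ)+1)⁻¹ := by
      apply inv_anti₀ (by positivity)
      have : (m:ℝ) ≤ m' := Nat.cast_le.mpr hmm
      linarith
    simp only [mem_setOf_eq] at hx ⊢
    linarith
  rw [hmono.measure_iUnion]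
  apply iSup_le
  intro m
  have hlt : sInf (dSet f t) < c + ((m:ℝ)+1)⁻¹ := by
    rw [← decRearr_eq, ← hc]
    have : (0:ℝ) < ((m:ℝ)+1)⁻¹ := by positivity
    linarith
  obtain ⟨sv, hsv, hsvlt⟩ := exists_lt_of_csInf_lt hne hlt
  refine le_trans (measure_mono ?_) hsv.2
  intro x hx
  exact lt_trans hsvlt hx

lemma decRearr_le_bound {f : ℝ → ℝ} {t b : ℝ} (hb : 0 ≤ b)
    (h : μ01 {x | b < |f x|} ≤ ENNReal.ofReal t) : decRearr f t ≤ b :=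
  csInf_le dSet_bddBelow ⟨hb, h⟩

lemma decRearr_le_toReal {f : ℝ → ℝ} (hE : eLpNorm f ⊤ μ01 ≠ ⊤) (t : ℝ) :
    decRearr f t ≤ (eLpNorm f ⊤ μ01).toReal := by
  have h0 : μ01 {x | (eLpNorm f ⊤ μ01).toReal < |f x|} = 0 := by
    apply measure_eq_zero_iff_ae_notMem.mpr
    filter_upwards [ENNReal.ae_le_essSup (μ := μ01) (fun x => (‖f x‖₊ : ℝ≥0∞))] with x hx
    simp only [mem_setOf_eq, not_lt]
    have h2 : (‖f x‖₊ : ℝ≥0∞).toReal ≤ (eLpNorm f ⊤ μ01).toReal := by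
      apply ENNReal.toReal_mono hE
      rw [eLpNorm_exponent_top]
      exact hx
    simpa [Real.norm_eq_abs] using h2
  exact decRearr_le_bound ENNReal.toReal_nonneg (by rw [h0]; exact zero_le)

lemma decRearr_congr {f g : ℝ → ℝ} (h : f =ᵐ[μ01] g) : decRearr f = decRearr g := by
  funext t
  unfold decRearr
  have hm : ∀ sv : ℝ, μ01 {x | sv < |f x|} = μ01 {x | sv < |g x|} := by
    intro sv
    apply measure_congr
    filter_upwards [h] with x hx
    show (sv < |f x|) = (sv < |g x|)
    rw [hx]
  simp only [hm]

end Aux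

section Stage2
namespace Aux

variable {φ : ℝ → ℝ}

lemma phi_nonneg (hφ : IsPhi φ) {r : ℝ} (h0 : 0 ≤ r) (h1 : r ≤ 1) : 0 ≤ φ r := by
  rcases eq_or_lt_of_le h0 with h | h
  · rw [← h, hφ.zero]
  · exact (hφ.pos r h h1).le

/-- the basic concavity estimate : `φ r ≤ (φ σ / σ) * (σ + r)`. -/
lemma phi_ratio (hφ : IsPhi φ) {σ r : ℝ} (hσ0 : 0 < σ) (hσ1 : σ ≤ 1)
    (hr0 : 0 ≤ r) (hr1 : r ≤ 1) : φ r ≤ φ σ / σ * (σ + r) := by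
  have hφσ : 0 < φ σ := hφ.pos σ hσ0 hσ1
  have hq : 0 < φ σ / σ := div_pos hφσ hσ0
  rcases le_or_gt r σ with h | h
  · have h1 : φ r ≤ φ σ := hφ.mono ⟨hr0, hr1⟩ ⟨hσ0.le, hσ1⟩ h
    have h2 : φ σ = φ σ / σ * σ := by field_simp
    nlinarith
  · -- σ < r : use concavity at σ = (σ/r) * r + (1 - σ/r) * 0
    have hr : 0 < r := hσ0.trans h
    have hb0 : 0 ≤ σ / r := by positivity
    have hb1 : σ / r ≤ 1 := by
      rw [div_le_one hr]; exact h.le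
    have key : (1 - σ / r) • φ 0 + (σ / r) • φ r ≤ φ ((1 - σ / r) • (0:ℝ) + (σ / r) • r) :=
      hφ.concave.2 ⟨le_refl 0, by norm_num⟩ ⟨hr.le, hr1⟩ (by linarith) hb0 (by ring)
    have hpt : (1 - σ / r) • (0:ℝ) + (σ / r) • r = σ := by
      simp only [smul_eq_mul]; field_simp; ring
    rw [hpt, hφ.zero] at key
    -- key : (1-σ/r) * 0 + (σ/r) * φ r ≤ φ σ
    simp only [smul_eq_mul, mul_zero, zero_add] at key
    -- φ r ≤ (r/σ) φ σ = φσ/σ * r ≤ φσ/σ (σ + r)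
    have h3 : φ r ≤ φ σ / σ * r := by
      rw [div_mul_eq_mul_div, le_div_iff₀ hσ0]
      calc φ r * σ = (σ / r * φ r) * r := by field_simp
        _ ≤ φ σ * r := by nlinarith
    nlinarith

/-- a.e. slope lower bound for the derivative of a concave nondecreasing function. -/
lemma ae_deriv_slope (hφ : IsPhi φ) :
    ∀ᵐ t ∂(volume : Measure ℝ), t ∈ Set.Ioo (0:ℝ) 1 →
      ∀ u, t < u → u ≤ 1 → (φ u - φ t) / (u - t) ≤ deriv φ t := by
  set g : ℝ → ℝ := fun x => φ (max 0 (min x 1)) with hg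
  have hproj : ∀ x : ℝ, max 0 (min x 1) ∈ Set.Icc (0:ℝ) 1 := fun x =>
    ⟨le_max_left _ _, max_le zero_le_one (min_le_right _ _)⟩
  have hgmono : Monotone g := fun x y hxy =>
    hφ.mono (hproj x) (hproj y) (max_le_max le_rfl (min_le_min hxy le_rfl))
  filter_upwards [hgmono.ae_differentiableAt] with t hdiff ht u htu hu1
  have hev : g =ᶠ[𝓝 t] φ := by
    apply eventuallyEq_of_mem (Ioo_mem_nhds ht.1 ht.2)
    intro x hx
    have : max 0 (min x 1) = x := by
      rw [min_eq_left hx.2.le, max_eq_right hx.1.le]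
    simp only [hg, this]
  have hdiff' : DifferentiableAt ℝ φ t := (hev.differentiableAt_iff).mp hdiff
  have hD : HasDerivAt φ (deriv φ t) t := hdiff'.hasDerivAt
  have hslope := hasDerivAt_iff_tendsto_slope.mp hD
  have hslope' : Tendsto (slope φ t) (𝓝[>] t) (𝓝 (deriv φ t)) :=
    hslope.mono_left (nhdsWithin_mono t (fun x hx => (Set.mem_compl_singleton_iff).mpr (ne_of_gt hx)))
  refine ge_of_tendsto hslope' ?_
  filter_upwards [Ioo_mem_nhdsGT_of_mem (Set.mem_Ico.mpr ⟨le_refl t, htu⟩)] with v hv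
  -- hv : v ∈ Ioo t u ; goal : (φ u - φ t)/(u - t) ≤ slope φ t v
  rw [slope_def_field]
  have hvt : (0:ℝ) < v - t := by linarith [hv.1]
  have huv : (0:ℝ) < u - v := by linarith [hv.2]
  have hut : (0:ℝ) < u - t := by linarith
  have h1 := hφ.concave.slope_anti_adjacent (x := t) (y := v) (z := u)
    ⟨ht.1.le, ht.2.le⟩ ⟨(ht.1.trans htu).le, hu1⟩ hv.1 hv.2
  set S := (φ v - φ t) / (v - t) with hS
  have h2 : φ u - φ v ≤ (u - v) * S := by
    have := (div_le_iff₀ huv).mp h1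
    linarith
  have h3 : φ v - φ t = (v - t) * S := by
    rw [hS]; field_simp
  rw [div_le_iff₀ hut]
  linarith

end Aux
end Stage2

section Stage3
namespace Aux

variable {φs : ℝ → ℝ}

lemma limZero_bddBelow (hφs : IsPhi φs) : BddBelow (φs '' Set.Ioc 0 1) :=
  ⟨0, by rintro y ⟨t, ht, rfl⟩; exact (hφs.pos t ht.1 ht.2).le⟩

lemma limZero_nonneg (hφs : IsPhi φs) : 0 ≤ limZero φs :=
  Real.sInf_nonneg (by rintro y ⟨t, ht, rfl⟩; exact (hφs.pos t ht.1 ht.2).le)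

lemma limZero_le (hφs : IsPhi φs) {t : ℝ} (ht : t ∈ Set.Ioc (0:ℝ) 1) : limZero φs ≤ φs t :=
  csInf_le (limZero_bddBelow hφs) ⟨t, ht, rfl⟩

lemma phis_p_mono (hφs : IsPhi φs) {k l : ℕ} (h : k ≤ l) : φs (p l) ≤ φs (p k) :=
  hφs.mono ⟨(p_pos l).le, p_le_one l⟩ ⟨(p_pos k).le, p_le_one k⟩ (p_anti h)

lemma tendsto_phis_p (hφs : IsPhi φs) :
    Tendsto (fun k : ℕ => φs (p k)) atTop (𝓝 (limZero φs)) := by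
  have hanti : Antitone (fun k : ℕ => φs (p k)) := fun k l hkl => phis_p_mono hφs hkl
  have hbdd : BddBelow (Set.range fun k : ℕ => φs (p k)) :=
    ⟨0, by rintro y ⟨k, rfl⟩; exact (hφs.pos _ (p_pos k) (p_le_one k)).le⟩
  have h1 := tendsto_atTop_ciInf hanti hbdd
  have h2 : ⨅ k : ℕ, φs (p k) = limZero φs := by
    apply le_antisymm
    · refine le_csInf ⟨φs 1, 1, ⟨zero_lt_one, le_refl 1⟩, rfl⟩ ?_
      rintro y ⟨t, ht, rfl⟩
      obtain ⟨k, hk⟩ := exists_pow_lt_of_lt_one ht.1 (show (2:ℝ)⁻¹ < 1 by norm_num)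
      exact ciInf_le_of_le hbdd k (hφs.mono ⟨(p_pos k).le, p_le_one k⟩ ⟨ht.1.le, ht.2⟩ hk.le)
    · exact le_ciInf fun k => limZero_le hφs (p_mem k)
  rwa [h2] at h1

def Dfun (φs : ℝ → ℝ) (j : ℕ) : ℝ := φs (p j) - φs (p (j+1))

lemma D_nonneg (hφs : IsPhi φs) (j : ℕ) : 0 ≤ Dfun φs j :=
  sub_nonneg.mpr (phis_p_mono hφs (Nat.le_succ j))

lemma partial_sum_D (hφs : IsPhi φs) (c : ℕ) : ∀ K : ℕ,
    ∑ j ∈ Finset.range K, (if c ≤ j then Dfun φs j else 0) = φs (p c) - φs (p (max c K)) := by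
  intro K
  induction K with
  | zero => simp
  | succ K ih =>
    rw [Finset.sum_range_succ, ih]
    rcases le_or_gt c K with h | h
    · rw [if_pos h, max_eq_right h, max_eq_right (h.trans (Nat.le_succ K))]
      unfold Dfun; ring
    · rw [if_neg (by omega), max_eq_left h.le, max_eq_left (by omega)]
      ring

lemma ofReal_phis_eq (hφs : IsPhi φs) (c : ℕ) :
    ENNReal.ofReal (φs (p c)) =
      ENNReal.ofReal (limZero φs)
        + ∑' j : ℕ, (if c ≤ j then ENNReal.ofReal (Dfun φs j) else 0) := by
  set g : ℕ → ℝ := fun j => if c ≤ j then Dfun φs j else 0 with hgdef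
  have hgnn : ∀ j, 0 ≤ g j := fun j => by
    by_cases h : c ≤ j
    · simpa [hgdef, h] using D_nonneg hφs j
    · simp [hgdef, h]
  have hsum : HasSum g (φs (p c) - limZero φs) := by
    rw [hasSum_iff_tendsto_nat_of_nonneg hgnn]
    have heq : (fun K => ∑ j ∈ Finset.range K, g j)
        = fun K => φs (p c) - φs (p (max c K)) := funext (partial_sum_D hφs c)
    rw [heq]
    apply Tendsto.const_sub
    have hmax : Tendsto (fun K : ℕ => max c K) atTop atTop :=
      tendsto_atTop_mono (fun K => le_max_right c K) tendsto_id
    exact (tendsto_phis_p hφs).comp hmax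
  have h1 : ∑' j, ENNReal.ofReal (g j) = ENNReal.ofReal (φs (p c) - limZero φs) := by
    rw [← ENNReal.ofReal_tsum_of_nonneg hgnn hsum.summable, hsum.tsum_eq]
  have h2 : ∀ j, ENNReal.ofReal (g j) = (if c ≤ j then ENNReal.ofReal (Dfun φs j) else 0) :=
    fun j => by by_cases h : c ≤ j <;> simp [hgdef, h]
  calc ENNReal.ofReal (φs (p c))
      = ENNReal.ofReal (limZero φs) + ENNReal.ofReal (φs (p c) - limZero φs) := by
        rw [← ENNReal.ofReal_add (limZero_nonneg hφs)
          (by linarith [limZero_le hφs (p_mem c)])]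
        congr 1; ring
    _ = _ := by rw [← h1, tsum_congr h2]

end Aux
end Stage3
section Stage4
namespace Aux

/-- heights sequence -/
def la (f' : ℝ → ℝ) (k : ℕ) : ℝ := decRearr f' (p k)

/-- layer heights -/
def lm (f' : ℝ → ℝ) : ℕ → ℝ
  | 0 => la f' 0
  | (k+1) => la f' (k+1) - la f' k

/-- the layers of `|f'|` -/
def layer (f' : ℝ → ℝ) : ℕ → ℝ → ℝ
  | 0 => fun x => min |f' x| (la f' 0)
  | (k+1) => fun x => min |f' x| (la f' (k+1)) - min |f' x| (la f' k)

variable {f' : ℝ → ℝ}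

lemma la_nonneg (f' : ℝ → ℝ) (k : ℕ) : 0 ≤ la f' k := decRearr_nonneg _ _

lemma la_mono (hf' : Measurable f') {k l : ℕ} (h : k ≤ l) : la f' k ≤ la f' l :=
  decRearr_anti hf' (p_pos l) (p_anti h)

lemma lm_nonneg (hf' : Measurable f') (k : ℕ) : 0 ≤ lm f' k := by
  cases k with
  | zero => exact la_nonneg f' 0
  | succ k => exact sub_nonneg.mpr (la_mono hf' (Nat.le_succ k))

lemma layer_nonneg (hf' : Measurable f') (k : ℕ) (x : ℝ) : 0 ≤ layer f' k x := by
  cases k with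
  | zero => exact le_min (abs_nonneg _) (la_nonneg f' 0)
  | succ k =>
    exact sub_nonneg.mpr (min_le_min le_rfl (la_mono hf' (Nat.le_succ k)))

lemma layer_le (hf' : Measurable f') (k : ℕ) (x : ℝ) : layer f' k x ≤ lm f' k := by
  cases k with
  | zero => exact min_le_right _ _
  | succ k =>
    show min |f' x| (la f' (k+1)) - min |f' x| (la f' k) ≤ la f' (k+1) - la f' k
    have h := la_mono hf' (Nat.le_succ k)
    rcases le_total |f' x| (la f' k) with h1 | h1
    · rw [min_eq_left h1, min_eq_left (h1.trans h)]; linarith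
    · rw [min_eq_right h1]
      have := min_le_left |f' x| (la f' (k+1))
      have := min_le_right |f' x| (la f' (k+1))
      linarith

lemma layer_zero_of_le (hf' : Measurable f') (k : ℕ) (x : ℝ) (h : |f' x| ≤ la f' k) :
    layer f' (k+1) x = 0 := by
  show min |f' x| (la f' (k+1)) - min |f' x| (la f' k) = 0
  have h2 : |f' x| ≤ la f' (k+1) := h.trans (la_mono hf' (Nat.le_succ k))
  rw [min_eq_left h, min_eq_left h2, sub_self]

lemma layer_partial (f' : ℝ → ℝ) (x : ℝ) (K : ℕ) :
    ∑ k ∈ Finset.range (K+1), layer f' k x = min |f' x| (la f' K) := by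
  induction K with
  | zero => simp [layer]
  | succ K ih => rw [Finset.sum_range_succ, ih]; show _ + (min _ _ - min _ _) = _; ring

lemma lm_partial (f' : ℝ → ℝ) (K : ℕ) :
    ∑ k ∈ Finset.range (K+1), lm f' k = la f' K := by
  induction K with
  | zero => simp [lm]
  | succ K ih => rw [Finset.sum_range_succ, ih]; show _ + (_ - _) = _; ring

lemma layer_measurable (hf' : Measurable f') (k : ℕ) : Measurable (layer f' k) := by
  cases k with
  | zero => exact hf'.abs.min measurable_const
  | succ k => exact (hf'.abs.min measurable_const).sub (hf'.abs.min measurable_const)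

end Aux
end Stage4
section Stage5
namespace Aux

variable {φs : ℝ → ℝ} {f' : ℝ → ℝ}

lemma p_one : p 1 = 2⁻¹ := by rw [p, pow_one]

lemma lambda2_bound (hφs : IsPhi φs) (hf' : Measurable f') :
    ∑' j : ℕ, ENNReal.ofReal (la f' (j+1) * Dfun φs j)
      ≤ 4 * ∫⁻ t in Set.Ioc (0:ℝ) 1, ENNReal.ofReal (decRearr f' t * deriv φs t) := by
  set I : ℕ → Set ℝ := fun j => Set.Ioc (p (j+2)) (p (j+1)) with hI
  have hms : ∀ j, MeasurableSet (I j) := fun j => measurableSet_Ioc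
  have hdisj : Pairwise (Function.onFun Disjoint I) := by
    have key : ∀ i j : ℕ, i < j → Disjoint (I i) (I j) := by
      intro i j hij
      rw [hI, Set.Ioc_disjoint_Ioc]
      refine le_trans (min_le_right _ _) (le_trans ?_ (le_max_left _ _))
      exact p_anti (by omega)
    intro i j hij
    rcases lt_or_gt_of_ne hij with h | h
    · exact key i j h
    · exact (key j i h).symm
  have hsub : (⋃ j, I j) ⊆ Set.Ioc (0:ℝ) 1 := by
    rintro x hx
    obtain ⟨j, hj⟩ := Set.mem_iUnion.mp hx
    exact ⟨(p_pos (j+2)).trans hj.1, hj.2.trans (p_le_one (j+1))⟩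
  have hj_bound : ∀ j : ℕ,
      ENNReal.ofReal (la f' (j+1) * Dfun φs j / 4)
        ≤ ∫⁻ t in I j, ENNReal.ofReal (decRearr f' t * deriv φs t) := by
    intro j
    have hae : ∀ᵐ t ∂(volume.restrict (I j)),
        ENNReal.ofReal (la f' (j+1) * (Dfun φs j / p j))
          ≤ ENNReal.ofReal (decRearr f' t * deriv φs t) := by
      filter_upwards [ae_restrict_of_ae (ae_deriv_slope hφs), ae_restrict_mem (hms j)]
        with t hslope htI
      have ht0 : 0 < t := (p_pos (j+2)).trans htI.1
      have htp : t ≤ p (j+1) := htI.2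
      have ht1 : t < 1 := lt_of_le_of_lt (htp.trans (p_anti (Nat.one_le_iff_ne_zero.mpr (by omega))))
        (by rw [p_one]; norm_num)
      have hpj : p (j+1) < p j := by
        have := p_pos j; rw [p_succ]; linarith
      have hd := hslope ⟨ht0, ht1⟩ (p j) (lt_of_le_of_lt htp hpj) (p_le_one j)
      -- slope lower bound
      have hnum : Dfun φs j ≤ φs (p j) - φs t := by
        have : φs t ≤ φs (p (j+1)) :=
          hφs.mono ⟨ht0.le, ht1.le⟩ ⟨(p_pos _).le, p_le_one _⟩ htp
        unfold Dfun; linarith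
      have hden : p j - t ≤ p j := by linarith
      have hden0 : 0 < p j - t := by linarith [lt_of_le_of_lt htp hpj]
      have hslope2 : Dfun φs j / p j ≤ (φs (p j) - φs t) / (p j - t) :=
        div_le_div₀ (by linarith [D_nonneg hφs j]) hnum hden0 hden
      have hderiv : Dfun φs j / p j ≤ deriv φs t := le_trans hslope2 hd
      have hrear : la f' (j+1) ≤ decRearr f' t := decRearr_anti hf' ht0 htp
      apply ENNReal.ofReal_le_ofReal
      exact mul_le_mul hrear hderiv (div_nonneg (D_nonneg hφs j) (p_pos j).le)
        (decRearr_nonneg _ _)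
    calc ENNReal.ofReal (la f' (j+1) * Dfun φs j / 4)
        = ENNReal.ofReal (la f' (j+1) * (Dfun φs j / p j)) * volume (I j) := by
          rw [hI]
          have hvol : volume (Set.Ioc (p (j+2)) (p (j+1))) = ENNReal.ofReal (p (j+2)) := by
            rw [Real.volume_Ioc]
            congr 1
            rw [p_succ (j+1)]; ring
          rw [hvol, ← ENNReal.ofReal_mul
            (mul_nonneg (la_nonneg _ _) (div_nonneg (D_nonneg hφs j) (p_pos j).le))]
          congr 1
          have h4 : p (j+2) = p j / 4 := by rw [p_succ (j+1), p_succ j]; ring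
          have hpne : p j ≠ 0 := (p_pos j).ne'
          rw [h4]
          field_simp
      _ = ∫⁻ _ in I j, ENNReal.ofReal (la f' (j+1) * (Dfun φs j / p j)) := by
          rw [setLIntegral_const]
      _ ≤ _ := lintegral_mono_ae hae
  calc ∑' j : ℕ, ENNReal.ofReal (la f' (j+1) * Dfun φs j)
      = 4 * ∑' j : ℕ, ENNReal.ofReal (la f' (j+1) * Dfun φs j / 4) := by
        rw [← ENNReal.tsum_mul_left]
        congr 1; funext j
        rw [← ENNReal.ofReal_ofNat 4, ← ENNReal.ofReal_mul (by norm_num)]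
        congr 1; ring
    _ ≤ 4 * ∑' j : ℕ, ∫⁻ t in I j, ENNReal.ofReal (decRearr f' t * deriv φs t) := by
        gcongr
        exact hj_bound _
    _ = 4 * ∫⁻ t in ⋃ j, I j, ENNReal.ofReal (decRearr f' t * deriv φs t) := by
        rw [lintegral_iUnion hms hdisj]
    _ ≤ _ := by
        gcongr

end Aux
end Stage5
section Stage6
namespace Aux

variable {φs : ℝ → ℝ} {f' : ℝ → ℝ}

lemma tsum_lm_le (hf' : Measurable f') (hE : eLpNorm f' ⊤ μ01 ≠ ⊤) :
    ∑' k : ℕ, ENNReal.ofReal (lm f' k) ≤ eLpNorm f' ⊤ μ01 := by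
  rw [ENNReal.tsum_eq_iSup_sum]
  apply iSup_le
  intro S
  obtain ⟨n, hn⟩ := S.exists_nat_subset_range
  refine le_trans (Finset.sum_le_sum_of_subset hn) ?_
  cases n with
  | zero => simp
  | succ K =>
    have h1 : ∑ k ∈ Finset.range (K+1), ENNReal.ofReal (lm f' k)
        = ENNReal.ofReal (la f' K) := by
      rw [← ENNReal.ofReal_sum_of_nonneg (fun k _ => lm_nonneg hf' k), lm_partial]
    rw [h1]
    exact ENNReal.ofReal_le_of_le_toReal (decRearr_le_toReal hE _)

lemma inner_lm_sum (hf' : Measurable f') (j : ℕ) :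
    (∑' k : ℕ, if k ≤ j + 1 then ENNReal.ofReal (lm f' k) else 0)
      = ENNReal.ofReal (la f' (j+1)) := by
  rw [tsum_eq_sum (s := Finset.range (j+2))
    (fun k hk => if_neg (by simp only [Finset.mem_range] at hk; omega))]
  rw [Finset.sum_congr rfl (fun k hk => if_pos (by simp only [Finset.mem_range] at hk; omega))]
  rw [← ENNReal.ofReal_sum_of_nonneg (fun k _ => lm_nonneg hf' k), lm_partial]

lemma abel_bound (hφs : IsPhi φs) (hf' : Measurable f')
    (hcase : eLpNorm f' ⊤ μ01 ≠ ⊤ ∨ limZero φs = 0) :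
    ∑' k : ℕ, ENNReal.ofReal (lm f' k * φs (p (k-1)))
      ≤ eLpNorm f' ⊤ μ01 * ENNReal.ofReal (limZero φs)
        + ∑' j : ℕ, ENNReal.ofReal (la f' (j+1) * Dfun φs j) := by
  have hpoint : ∀ k : ℕ, ENNReal.ofReal (lm f' k * φs (p (k-1)))
      = ENNReal.ofReal (lm f' k) * ENNReal.ofReal (limZero φs)
        + ∑' j : ℕ, (if k ≤ j + 1 then ENNReal.ofReal (Dfun φs j) * ENNReal.ofReal (lm f' k) else 0) := by
    intro k
    rw [ENNReal.ofReal_mul (lm_nonneg hf' k), ofReal_phis_eq hφs (k-1), mul_add,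
      ← ENNReal.tsum_mul_left]
    congr 1
    apply tsum_congr
    intro j
    by_cases h : k - 1 ≤ j
    · rw [if_pos h, if_pos (by omega), mul_comm]
    · rw [if_neg h, if_neg (by omega), mul_zero]
  calc ∑' k : ℕ, ENNReal.ofReal (lm f' k * φs (p (k-1)))
      = (∑' k : ℕ, ENNReal.ofReal (lm f' k)) * ENNReal.ofReal (limZero φs)
        + ∑' k : ℕ, ∑' j : ℕ,
            (if k ≤ j + 1 then ENNReal.ofReal (Dfun φs j) * ENNReal.ofReal (lm f' k) else 0) := by
        rw [← ENNReal.tsum_mul_right, ← ENNReal.tsum_add]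
        exact tsum_congr hpoint
    _ ≤ eLpNorm f' ⊤ μ01 * ENNReal.ofReal (limZero φs)
        + ∑' j : ℕ, ENNReal.ofReal (la f' (j+1) * Dfun φs j) := by
        gcongr ?_ + ?_
        · rcases hcase with hE | hL0
          · exact mul_le_mul_left (tsum_lm_le hf' hE) _
          · rw [hL0]
            simp
        · rw [ENNReal.tsum_comm]
          apply le_of_eq
          apply tsum_congr
          intro j
          have : ∀ k : ℕ, (if k ≤ j + 1 then ENNReal.ofReal (Dfun φs j) * ENNReal.ofReal (lm f' k) else 0)
              = ENNReal.ofReal (Dfun φs j) * (if k ≤ j + 1 then ENNReal.ofReal (lm f' k) else 0) := by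
            intro k
            by_cases h : k ≤ j + 1 <;> simp [h]
          rw [tsum_congr this, ENNReal.tsum_mul_left, inner_lm_sum hf' j,
            ← ENNReal.ofReal_mul (D_nonneg hφs j), mul_comm (Dfun φs j)]

end Aux
end Stage6
section Stage7
namespace Aux

variable {f' : ℝ → ℝ}

lemma tsum_layer_ge (hf' : Measurable f') :
    ∀ᵐ x ∂μ01, ENNReal.ofReal |f' x| ≤ ∑' k : ℕ, ENNReal.ofReal (layer f' k x) := by
  have hN : μ01 (⋂ K : ℕ, {x | la f' K < |f' x|}) = 0 := by
    have hle : ∀ K : ℕ, μ01 (⋂ K : ℕ, {x | la f' K < |f' x|}) ≤ ENNReal.ofReal (p K) :=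
      fun K => (measure_mono (Set.iInter_subset _ K)).trans
        (measure_decRearr_lt hf' (p_pos K))
    have htd : Tendsto (fun K : ℕ => ENNReal.ofReal (p K)) atTop (𝓝 0) := by
      rw [← ENNReal.ofReal_zero]
      apply ENNReal.tendsto_ofReal
      exact tendsto_pow_atTop_nhds_zero_of_lt_one (by norm_num) (by norm_num)
    exact le_antisymm (ge_of_tendsto htd (Eventually.of_forall hle)) zero_le
  filter_upwards [measure_eq_zero_iff_ae_notMem.mp hN] with x hx
  simp only [Set.mem_iInter, Set.mem_setOf_eq, not_forall, not_lt] at hx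
  obtain ⟨K, hK⟩ := hx
  calc ENNReal.ofReal |f' x| = ENNReal.ofReal (min |f' x| (la f' K)) := by
        rw [min_eq_left hK]
    _ = ∑ k ∈ Finset.range (K+1), ENNReal.ofReal (layer f' k x) := by
        rw [← layer_partial f' x K,
          ENNReal.ofReal_sum_of_nonneg (fun k _ => layer_nonneg hf' k x)]
    _ ≤ ∑' k : ℕ, ENNReal.ofReal (layer f' k x) := ENNReal.sum_le_tsum _

end Aux
end Stage7
open Aux in
/-- for any sequence `s ⊂ (0,1]`, if `φ̃ₛ` is a concave, non-decreasing
function vanishing only at the origin with `φₛ ≤ φ̃ₛ ≤ 2 φₛ` on `[0,1]`, then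
`Λ_{φ̃ₛ} ↪ QA_{φ,ψ}` continuously. -/
theorem stmt13 {φ ψ : ℝ → ℝ} (hφ : IsPhi φ) (hψ : IsPsi ψ)
    (s : ℕ → ℝ) (hs : ∀ n, s n ∈ Set.Ioc (0:ℝ) 1)
    (φs : ℝ → ℝ) (hφs : IsPhi φs)
    (hequiv : ∀ t ∈ Set.Icc (0:ℝ) 1,
      phiSeq φ ψ s t ≤ φs t ∧ φs t ≤ 2 * phiSeq φ ψ s t) :
    ∃ C : ℝ, 0 < C ∧ ∀ f : ℝ → ℝ, MemLorentz φs f →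
      QANorm φ ψ f ≤ ENNReal.ofReal C * lorentzNorm φs f := by
  classical
  open Aux in
  refine ⟨8, by norm_num, ?_⟩
  intro f hf
  obtain ⟨hfm, hfin⟩ := hf
  by_cases hA : eLpNorm f ⊤ μ01 = ⊤ ∧ 0 < limZero φs
  · exfalso
    have h1 : lorentzNorm φs f = ⊤ := by
      rw [lorentzNorm, hA.1, ENNReal.top_mul
        (by simp only [ne_eq, ENNReal.ofReal_eq_zero, not_le]; exact hA.2), top_add]
    rw [h1] at hfin
    exact absurd hfin (lt_irrefl ⊤)
  push_neg at hA
  set f' : ℝ → ℝ := hfm.mk f with hf'def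
  have hf' : Measurable f' := hfm.measurable_mk
  have hff' : f =ᵐ[μ01] f' := hfm.ae_eq_mk
  have hEeq : eLpNorm f ⊤ μ01 = eLpNorm f' ⊤ μ01 := eLpNorm_congr_ae hff'
  have hdec : decRearr f = decRearr f' := decRearr_congr hff'
  have hL0nn : 0 ≤ limZero φs := limZero_nonneg hφs
  have hcase : eLpNorm f' ⊤ μ01 ≠ ⊤ ∨ limZero φs = 0 := by
    by_cases hE : eLpNorm f ⊤ μ01 = ⊤
    · exact Or.inr (le_antisymm (hA hE) hL0nn)
    · exact Or.inl (by rw [← hEeq]; exact hE)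
  apply ENNReal.le_of_forall_pos_le_add
  intro ε' hε' _
  set δ : ℝ := (ε' : ℝ) / 4 with hδdef
  have hδ : 0 < δ := by
    rw [hδdef]
    exact div_pos (by exact_mod_cast hε') (by norm_num)
  set εs : ℕ → ℝ := fun k => δ * p k / (lm f' k + 1) with hεs
  have hεpos : ∀ k, 0 < εs k := fun k => by
    have h1 := lm_nonneg hf' k
    have h2 := p_pos k
    simp only [hεs]
    positivity
  set τ : ℕ → ℝ := fun k => p (k - 1) with hτ
  have hτ0 : ∀ k, 0 < τ k := fun k => p_pos _
  have hτ1 : ∀ k, τ k ≤ 1 := fun k => p_le_one _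
  -- selection of near-optimal indices
  have hsel : ∀ k : ℕ, ∃ n : ℕ,
      max (s n) (τ k) * (φ (s n) / s n) * ψ ((n:ℝ)+1) < phiSeq φ ψ s (τ k) + εs k := by
    intro k
    have hps : phiSeq φ ψ s (τ k)
        = ⨅ n : ℕ, max (s n) (τ k) * (φ (s n) / s n) * ψ ((n:ℝ)+1) := if_neg (hτ0 k).ne'
    rw [hps]
    exact exists_lt_of_ciInf_lt (lt_add_of_pos_right _ (hεpos k))
  choose ν hν using hsel
  set c : ℕ → ℝ := fun n => φ (s n) / s n * ψ ((n:ℝ)+1) with hc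
  have hcpos : ∀ n, 0 < c n := fun n => by
    have h1 := (hs n).1
    have h2 := hφ.pos _ h1 (hs n).2
    have h3 := hψ.pos ((n:ℝ)+1) (by positivity)
    rw [hc]
    positivity
  have hcnn : ∀ n, 0 ≤ c n := fun n => (hcpos n).le
  have hφsnn : ∀ k, 0 ≤ φs (τ k) := fun k => (hφs.pos _ (hτ0 k) (hτ1 k)).le
  have hkey : ∀ k, c (ν k) * (s (ν k) + τ k) ≤ 2 * (φs (τ k) + εs k) := by
    intro k
    have h2 : phiSeq φ ψ s (τ k) ≤ φs (τ k) := (hequiv (τ k) ⟨(hτ0 k).le, hτ1 k⟩).1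
    have h5 : max (s (ν k)) (τ k) * c (ν k) < phiSeq φ ψ s (τ k) + εs k := by
      simp only [hc]
      rw [← mul_assoc]
      exact hν k
    have h3 : s (ν k) + τ k ≤ 2 * max (s (ν k)) (τ k) := by
      rcases le_total (s (ν k)) (τ k) with h | h
      · rw [max_eq_right h]; linarith [(hs (ν k)).1, hτ0 k]
      · rw [max_eq_left h]; linarith [(hs (ν k)).1, hτ0 k]
    nlinarith [hcnn (ν k), le_max_left (s (ν k)) (τ k), (hs (ν k)).1]
  -- the decomposition
  set T : ℕ → ℝ → ℝ≥0∞ := fun n x =>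
    ∑' k : ℕ, if ν k = n then ENNReal.ofReal (layer f' k x) else 0 with hT
  set H : ℕ → ℝ≥0∞ := fun n =>
    ∑' k : ℕ, if ν k = n then ENNReal.ofReal (lm f' k) else 0 with hH
  have hTleH : ∀ n x, T n x ≤ H n := fun n x => by
    rw [hT, hH]
    apply ENNReal.tsum_le_tsum
    intro k
    by_cases h : ν k = n
    · simp only [h, if_true]
      exact ENNReal.ofReal_le_ofReal (layer_le hf' k x)
    · simp [h]
  have hHfin : ∀ n, H n < ⊤ := by
    intro n
    rcases hcase with hE | hL0
    · calc H n ≤ ∑' k : ℕ, ENNReal.ofReal (lm f' k) := by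
            rw [hH]
            exact ENNReal.tsum_le_tsum fun k => by by_cases h : ν k = n <;> simp [h]
        _ ≤ eLpNorm f' ⊤ μ01 := tsum_lm_le hf' hE
        _ < ⊤ := lt_top_iff_ne_top.mpr hE
    · have hfib : {k : ℕ | ν k = n}.Finite := by
        by_contra hinf
        have hinf2 : {k : ℕ | ν k = n}.Infinite := hinf
        set q : ℝ := c n * s n with hq
        have hqpos : 0 < q := mul_pos (hcpos n) (hs n).1
        have hev1 : ∀ᶠ K : ℕ in atTop, φs (p K) < q / 2 := by
          apply (tendsto_phis_p hφs).eventually_lt_const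
          rw [hL0]; linarith
        have hev2 : ∀ᶠ K : ℕ in atTop, δ * p K < q / 2 := by
          have htd : Tendsto (fun K : ℕ => δ * p K) atTop (𝓝 (δ * 0)) :=
            (_root_.tendsto_pow_atTop_nhds_zero_of_lt_one (by norm_num) (by norm_num)).const_mul δ
          rw [mul_zero] at htd
          exact htd.eventually_lt_const (by linarith)
        obtain ⟨K1, hK1⟩ := eventually_atTop.mp hev1
        obtain ⟨K2, hK2⟩ := eventually_atTop.mp hev2
        obtain ⟨k, hkmem, hkgt⟩ := hinf2.exists_gt (max K1 K2 + 1)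
        have hk1 : K1 ≤ k - 1 := by omega
        have hk2 : K2 ≤ k := by omega
        have hb1 : φs (τ k) < q / 2 := by simp only [hτ]; exact hK1 _ hk1
        have hb2 : εs k < q / 2 := by
          have hle : εs k ≤ δ * p k := by
            simp only [hεs]
            apply div_le_self (mul_nonneg hδ.le (p_pos k).le) (by linarith [lm_nonneg hf' k])
          exact lt_of_le_of_lt hle (hK2 k hk2)
        have hchain : q ≤ φs (τ k) + εs k := by
          have h1 : c n * s n ≤ c n * max (s n) (τ k) :=
            mul_le_mul_of_nonneg_left (le_max_left _ _) (hcnn n)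
          have h5 : max (s n) (τ k) * c n < phiSeq φ ψ s (τ k) + εs k := by
            simp only [hc]
            rw [← mul_assoc]
            have := hν k
            rw [hkmem] at this
            exact this
          have h2 : phiSeq φ ψ s (τ k) ≤ φs (τ k) := (hequiv (τ k) ⟨(hτ0 k).le, hτ1 k⟩).1
          rw [hq]
          nlinarith [mul_comm (c n) (max (s n) (τ k))]
        linarith
      have hHeq : H n = ∑ k ∈ hfib.toFinset, ENNReal.ofReal (lm f' k) := by
        simp only [hH]
        rw [tsum_eq_sum (s := hfib.toFinset)
          (fun k hk => if_neg (by simpa using hk))]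
        exact Finset.sum_congr rfl fun k hk => if_pos (by simpa using hk)
      rw [hHeq]
      exact ENNReal.sum_lt_top.mpr fun k _ => ENNReal.ofReal_lt_top
  have hTmeas : ∀ n, Measurable (T n) := by
    intro n
    simp only [hT]
    apply Measurable.ennreal_tsum
    intro k
    by_cases h : ν k = n
    · simpa [h] using (layer_measurable hf' k).ennreal_ofReal
    · simp only [h, if_false]
      exact measurable_const
  set g : ℕ → ℝ → ℝ := fun n x => (T n x).toReal with hg
  have hgofReal : ∀ n x, ENNReal.ofReal (g n x) = T n x := fun n x =>
    ENNReal.ofReal_toReal (lt_of_le_of_lt (hTleH n x) (hHfin n)).ne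
  have hMle : ∀ n, eLpNorm (g n) ⊤ μ01 ≤ H n := by
    intro n
    rw [eLpNorm_exponent_top]
    refine essSup_le_of_ae_le _ ?_
    apply Eventually.of_forall
    intro x
    show (‖g n x‖₊ : ℝ≥0∞) ≤ H n
    rw [show (‖g n x‖₊ : ℝ≥0∞) = ‖g n x‖ₑ from rfl, Real.enorm_eq_ofReal ENNReal.toReal_nonneg, hgofReal]
    exact hTleH n x
  have hMfin : ∀ n, eLpNorm (g n) ⊤ μ01 < ⊤ := fun n => lt_of_le_of_lt (hMle n) (hHfin n)
  -- coverage
  have hswap : ∀ x, (∑' n : ℕ, ENNReal.ofReal (g n x))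
      = ∑' k : ℕ, ENNReal.ofReal (layer f' k x) := by
    intro x
    calc ∑' n : ℕ, ENNReal.ofReal (g n x) = ∑' n : ℕ, T n x :=
          tsum_congr fun n => hgofReal n x
      _ = ∑' n : ℕ, ∑' k : ℕ, (if ν k = n then ENNReal.ofReal (layer f' k x) else 0) := by
          simp only [hT]
      _ = ∑' k : ℕ, ∑' n : ℕ, (if ν k = n then ENNReal.ofReal (layer f' k x) else 0) :=
          ENNReal.tsum_comm
      _ = ∑' k : ℕ, ENNReal.ofReal (layer f' k x) := by
          apply tsum_congr
          intro k
          rw [tsum_eq_single (ν k) (fun n hn => if_neg (fun h => hn h.symm))]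
          simp
  have hcover : ∀ᵐ x ∂μ01, ENNReal.ofReal |f x| ≤ ∑' n : ℕ, ENNReal.ofReal (g n x) := by
    filter_upwards [hff', tsum_layer_ge hf'] with x hx1 hx2
    rw [hswap, hx1]
    exact hx2
  have hAdm : Admissible f g :=
    ⟨fun n => (ENNReal.measurable_toReal.comp (hTmeas n)).aemeasurable,
      hMfin, fun n x => ENNReal.toReal_nonneg, hcover⟩
  -- L¹ bound
  set Lb : ℕ → ℝ≥0∞ := fun n =>
    ∑' k : ℕ, if ν k = n then ENNReal.ofReal (lm f' k) * ENNReal.ofReal (τ k) else 0 with hLb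
  have hlayint : ∀ k, ∫⁻ x, ENNReal.ofReal (layer f' k x) ∂μ01
      ≤ ENNReal.ofReal (lm f' k) * ENNReal.ofReal (τ k) := by
    intro k
    cases k with
    | zero =>
      calc ∫⁻ x, ENNReal.ofReal (layer f' 0 x) ∂μ01
          ≤ ∫⁻ _, ENNReal.ofReal (lm f' 0) ∂μ01 :=
            lintegral_mono fun x => ENNReal.ofReal_le_ofReal (layer_le hf' 0 x)
        _ = ENNReal.ofReal (lm f' 0) := by rw [lintegral_const, measure_univ, mul_one]
        _ = ENNReal.ofReal (lm f' 0) * ENNReal.ofReal (τ 0) := by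
            simp only [hτ]
            rw [show p (0-1) = 1 from pow_zero _, ENNReal.ofReal_one, mul_one]
    | succ k =>
      have hbound : ∀ x, ENNReal.ofReal (layer f' (k+1) x)
          ≤ Set.indicator {x : ℝ | la f' k < |f' x|}
              (fun _ => ENNReal.ofReal (lm f' (k+1))) x := by
        intro x
        by_cases h : la f' k < |f' x|
        · rw [Set.indicator_of_mem (show x ∈ {x : ℝ | la f' k < |f' x|} from h)]
          exact ENNReal.ofReal_le_ofReal (layer_le hf' (k+1) x)
        · rw [Set.indicator_of_notMem (show x ∉ {x : ℝ | la f' k < |f' x|} from h),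
            layer_zero_of_le hf' k x (not_lt.mp h)]
          simp
      calc ∫⁻ x, ENNReal.ofReal (layer f' (k+1) x) ∂μ01
          ≤ ∫⁻ x, Set.indicator {x : ℝ | la f' k < |f' x|}
              (fun _ => ENNReal.ofReal (lm f' (k+1))) x ∂μ01 := lintegral_mono hbound
        _ = ENNReal.ofReal (lm f' (k+1)) * μ01 {x : ℝ | la f' k < |f' x|} := by
            rw [lintegral_indicator (measSet hf' _), setLIntegral_const]
        _ ≤ ENNReal.ofReal (lm f' (k+1)) * ENNReal.ofReal (p k) :=
            mul_le_mul_right (measure_decRearr_lt hf' (p_pos k)) _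
        _ = ENNReal.ofReal (lm f' (k+1)) * ENNReal.ofReal (τ (k+1)) := by
            simp only [hτ, Nat.add_sub_cancel]
  have hLle : ∀ n, eLpNorm (g n) 1 μ01 ≤ Lb n := by
    intro n
    rw [eLpNorm_one_eq_lintegral_enorm]
    calc ∫⁻ x, (‖g n x‖₊ : ℝ≥0∞) ∂μ01 = ∫⁻ x, T n x ∂μ01 := by
          apply lintegral_congr
          intro x
          rw [show (‖g n x‖₊ : ℝ≥0∞) = ‖g n x‖ₑ from rfl, Real.enorm_eq_ofReal ENNReal.toReal_nonneg, hgofReal]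
      _ = ∑' k : ℕ, ∫⁻ x, (if ν k = n then ENNReal.ofReal (layer f' k x) else 0) ∂μ01 := by
          simp only [hT]
          apply lintegral_tsum
          intro k
          by_cases h : ν k = n
          · simpa [h] using ((layer_measurable hf' k).ennreal_ofReal).aemeasurable
          · simp only [h, if_false]
            exact aemeasurable_const
      _ ≤ Lb n := by
          simp only [hLb]
          apply ENNReal.tsum_le_tsum
          intro k
          by_cases h : ν k = n
          · simp only [h, if_true]
            exact hlayint k
          · simp [h]
  have hL1M : ∀ n, eLpNorm (g n) 1 μ01 ≤ eLpNorm (g n) ⊤ μ01 := by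
    intro n
    rw [eLpNorm_one_eq_lintegral_enorm, eLpNorm_exponent_top]
    calc ∫⁻ x, (‖g n x‖₊ : ℝ≥0∞) ∂μ01
        ≤ ∫⁻ _, eLpNormEssSup (g n) μ01 ∂μ01 := lintegral_mono_ae ae_le_eLpNormEssSup
      _ = eLpNormEssSup (g n) μ01 := by rw [lintegral_const, measure_univ, mul_one]
  -- cost estimate per index
  have hterm : ∀ n : ℕ, ENNReal.ofReal (ψ ((n:ℝ)+1) * (eLpNorm (g n) ⊤ μ01).toReal *
      φ ((eLpNorm (g n) 1 μ01 / eLpNorm (g n) ⊤ μ01).toReal))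
      ≤ ENNReal.ofReal (c n) * (ENNReal.ofReal (s n) * H n + Lb n) := by
    intro n
    by_cases hM0 : eLpNorm (g n) ⊤ μ01 = 0
    · rw [hM0]
      simp only [ENNReal.toReal_zero, mul_zero, zero_mul, ENNReal.ofReal_zero]
      exact zero_le
    · have hMne : eLpNorm (g n) ⊤ μ01 ≠ ⊤ := (hMfin n).ne
      have hMt : 0 < (eLpNorm (g n) ⊤ μ01).toReal := ENNReal.toReal_pos hM0 hMne
      have hLM := hL1M n
      have hLne : eLpNorm (g n) 1 μ01 ≠ ⊤ := (lt_of_le_of_lt hLM (hMfin n)).ne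
      have hr : (eLpNorm (g n) 1 μ01 / eLpNorm (g n) ⊤ μ01).toReal
          = (eLpNorm (g n) 1 μ01).toReal / (eLpNorm (g n) ⊤ μ01).toReal :=
        ENNReal.toReal_div _ _
      set Mt := (eLpNorm (g n) ⊤ μ01).toReal with hMtdef
      set Lt := (eLpNorm (g n) 1 μ01).toReal with hLtdef
      have hLtnn : 0 ≤ Lt := ENNReal.toReal_nonneg
      have hr0 : 0 ≤ Lt / Mt := by positivity
      have hr1 : Lt / Mt ≤ 1 := by
        rw [div_le_one hMt]
        exact ENNReal.toReal_mono hMne hLM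
      have hphi := phi_ratio hφ (hs n).1 (hs n).2 hr0 hr1
      have hψnn : 0 ≤ ψ ((n:ℝ)+1) := (hψ.pos ((n:ℝ)+1) (by positivity)).le
      have hMss : Mt * (s n + Lt / Mt) = s n * Mt + Lt := by
        field_simp
      have hreal : ψ ((n:ℝ)+1) * Mt * φ ((eLpNorm (g n) 1 μ01 / eLpNorm (g n) ⊤ μ01).toReal)
          ≤ c n * (s n * Mt + Lt) := by
        rw [hr]
        calc ψ ((n:ℝ)+1) * Mt * φ (Lt / Mt)
            ≤ ψ ((n:ℝ)+1) * Mt * (φ (s n) / s n * (s n + Lt / Mt)) := by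
              apply mul_le_mul_of_nonneg_left hphi (by positivity)
          _ = φ (s n) / s n * ψ ((n:ℝ)+1) * (Mt * (s n + Lt / Mt)) := by ring
          _ = c n * (s n * Mt + Lt) := by simp only [hc]; rw [hMss]
      calc ENNReal.ofReal (ψ ((n:ℝ)+1) * Mt *
            φ ((eLpNorm (g n) 1 μ01 / eLpNorm (g n) ⊤ μ01).toReal))
          ≤ ENNReal.ofReal (c n * (s n * Mt + Lt)) := ENNReal.ofReal_le_ofReal hreal
        _ = ENNReal.ofReal (c n) * (ENNReal.ofReal (s n) * ENNReal.ofReal Mt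
              + ENNReal.ofReal Lt) := by
            rw [ENNReal.ofReal_mul (hcnn n),
              ENNReal.ofReal_add (mul_nonneg (hs n).1.le ENNReal.toReal_nonneg) hLtnn,
              ENNReal.ofReal_mul (hs n).1.le]
        _ = ENNReal.ofReal (c n) * (ENNReal.ofReal (s n) * eLpNorm (g n) ⊤ μ01
              + eLpNorm (g n) 1 μ01) := by
            rw [hMtdef, hLtdef, ENNReal.ofReal_toReal hMne, ENNReal.ofReal_toReal hLne]
        _ ≤ ENNReal.ofReal (c n) * (ENNReal.ofReal (s n) * H n + Lb n) := by
            gcongr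
            · exact hMle n
            · exact hLle n
  -- sum the cost
  have hlmeps : ∀ k, lm f' k * εs k ≤ δ * p k := by
    intro k
    have h1 := lm_nonneg hf' k
    have h2 := p_pos k
    have h3 : lm f' k * (δ * p k / (lm f' k + 1)) = δ * p k * (lm f' k / (lm f' k + 1)) := by
      ring
    have h4 : lm f' k / (lm f' k + 1) ≤ 1 := by
      rw [div_le_one (by linarith)]; linarith
    calc lm f' k * εs k = δ * p k * (lm f' k / (lm f' k + 1)) := by simp only [hεs]; exact h3
      _ ≤ δ * p k := by
          have h5 : 0 ≤ δ * p k := by positivity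
          nlinarith [mul_nonneg h5 (sub_nonneg.mpr h4)]
  set F : ℕ → ℕ → ℝ≥0∞ := fun n k => ENNReal.ofReal (c n) * (ENNReal.ofReal (s n)
    * ENNReal.ofReal (lm f' k) + ENNReal.ofReal (lm f' k) * ENNReal.ofReal (τ k)) with hF
  have hcost : seqCost φ ψ g ≤ (∑' k : ℕ, 2 * ENNReal.ofReal (lm f' k * φs (τ k)))
      + 2 * (ENNReal.ofReal δ * ∑' k : ℕ, ENNReal.ofReal (p k)) := by
    have hstep2 : ∀ n : ℕ, ENNReal.ofReal (c n) * (ENNReal.ofReal (s n) * H n + Lb n)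
        = ∑' k : ℕ, (if ν k = n then F n k else 0) := by
      intro n
      have h1 : ENNReal.ofReal (s n) * H n = ∑' k : ℕ,
          (if ν k = n then ENNReal.ofReal (s n) * ENNReal.ofReal (lm f' k) else 0) := by
        simp only [hH]
        rw [← ENNReal.tsum_mul_left]
        exact tsum_congr fun k => by by_cases h : ν k = n <;> simp [h]
      rw [h1]
      simp only [hLb]
      rw [← ENNReal.tsum_add, ← ENNReal.tsum_mul_left]
      exact tsum_congr fun k => by by_cases h : ν k = n <;> simp [hF, h, mul_add]
    have hstep3 : ∀ k : ℕ, F (ν k) k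
        ≤ 2 * ENNReal.ofReal (lm f' k * φs (τ k)) + 2 * ENNReal.ofReal (δ * p k) := by
      intro k
      have hτnn := (hτ0 k).le
      have hlmnn := lm_nonneg hf' k
      have hsnn := (hs (ν k)).1.le
      have hcol : F (ν k) k
          = ENNReal.ofReal (c (ν k) * (s (ν k) * lm f' k + lm f' k * τ k)) := by
        simp only [hF]
        rw [ENNReal.ofReal_mul (hcnn _),
          ENNReal.ofReal_add (mul_nonneg hsnn hlmnn) (mul_nonneg hlmnn hτnn),
          ENNReal.ofReal_mul hsnn, ENNReal.ofReal_mul hlmnn]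
      rw [hcol]
      have hre : c (ν k) * (s (ν k) * lm f' k + lm f' k * τ k)
          ≤ 2 * (lm f' k * φs (τ k)) + 2 * (lm f' k * εs k) := by
        have h1 := hkey k
        nlinarith [hcnn (ν k), hεpos k, hφsnn k]
      calc ENNReal.ofReal (c (ν k) * (s (ν k) * lm f' k + lm f' k * τ k))
          ≤ ENNReal.ofReal (2 * (lm f' k * φs (τ k)) + 2 * (lm f' k * εs k)) :=
            ENNReal.ofReal_le_ofReal hre
        _ ≤ ENNReal.ofReal (2 * (lm f' k * φs (τ k)))
            + ENNReal.ofReal (2 * (lm f' k * εs k)) := ENNReal.ofReal_add_le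
        _ ≤ 2 * ENNReal.ofReal (lm f' k * φs (τ k)) + 2 * ENNReal.ofReal (δ * p k) := by
            rw [ENNReal.ofReal_mul (by norm_num : (0:ℝ) ≤ 2),
              ENNReal.ofReal_mul (by norm_num : (0:ℝ) ≤ 2), ENNReal.ofReal_ofNat]
            exact add_le_add le_rfl
              (mul_le_mul_right (ENNReal.ofReal_le_ofReal (hlmeps k)) 2)
    calc seqCost φ ψ g
        ≤ ∑' n : ℕ, ENNReal.ofReal (c n) * (ENNReal.ofReal (s n) * H n + Lb n) :=
          ENNReal.tsum_le_tsum hterm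
      _ = ∑' n : ℕ, ∑' k : ℕ, (if ν k = n then F n k else 0) := tsum_congr hstep2
      _ = ∑' k : ℕ, ∑' n : ℕ, (if ν k = n then F n k else 0) := ENNReal.tsum_comm
      _ = ∑' k : ℕ, F (ν k) k := by
          apply tsum_congr
          intro k
          rw [tsum_eq_single (ν k) (fun n hn => if_neg (fun h => hn h.symm))]
          simp
      _ ≤ ∑' k : ℕ, (2 * ENNReal.ofReal (lm f' k * φs (τ k))
            + 2 * ENNReal.ofReal (δ * p k)) := ENNReal.tsum_le_tsum hstep3
      _ = (∑' k : ℕ, 2 * ENNReal.ofReal (lm f' k * φs (τ k)))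
            + 2 * (ENNReal.ofReal δ * ∑' k : ℕ, ENNReal.ofReal (p k)) := by
          rw [ENNReal.tsum_add]
          congr 1
          rw [ENNReal.tsum_mul_left]
          congr 1
          rw [← ENNReal.tsum_mul_left]
          exact tsum_congr fun k => ENNReal.ofReal_mul hδ.le
  have hgeo : ∑' k : ℕ, ENNReal.ofReal (p k) = 2 := by
    have h1 : ∀ k : ℕ, ENNReal.ofReal (p k) = (2⁻¹ : ℝ≥0∞) ^ k := by
      intro k
      show ENNReal.ofReal ((2⁻¹:ℝ) ^ k) = _
      rw [ENNReal.ofReal_pow (by norm_num)]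
      congr 1
      rw [ENNReal.ofReal_inv_of_pos (by norm_num)]
      norm_num
    rw [tsum_congr h1, ENNReal.tsum_geometric, ENNReal.one_sub_inv_two, inv_inv]
  have hεtot : 2 * (ENNReal.ofReal δ * (2:ℝ≥0∞)) = (ε' : ℝ≥0∞) := by
    rw [hδdef]
    calc (2:ℝ≥0∞) * (ENNReal.ofReal ((ε':ℝ)/4) * 2) = 4 * ENNReal.ofReal ((ε':ℝ)/4) := by
          ring
      _ = ENNReal.ofReal 4 * ENNReal.ofReal ((ε':ℝ)/4) := by rw [ENNReal.ofReal_ofNat]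
      _ = ENNReal.ofReal (4 * ((ε':ℝ)/4)) := (ENNReal.ofReal_mul (by norm_num)).symm
      _ = ENNReal.ofReal (ε':ℝ) := by congr 1; ring
      _ = (ε' : ℝ≥0∞) := ENNReal.ofReal_coe_nnreal
  have hQ : QANorm φ ψ f ≤ seqCost φ ψ g := by
    unfold QANorm
    exact iInf₂_le g hAdm
  set A := eLpNorm f ⊤ μ01 * ENNReal.ofReal (limZero φs) with hAdef
  set B := ∫⁻ t in Set.Ioc (0:ℝ) 1, ENNReal.ofReal (decRearr f t * deriv φs t) with hBdef
  have hmain' : (∑' k : ℕ, ENNReal.ofReal (lm f' k * φs (τ k))) ≤ A + 4 * B := by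
    have h0 : (∑' k : ℕ, ENNReal.ofReal (lm f' k * φs (τ k)))
        = ∑' k : ℕ, ENNReal.ofReal (lm f' k * φs (p (k - 1))) := by
      apply tsum_congr
      intro k
      simp only [hτ]
    rw [h0]
    calc ∑' k : ℕ, ENNReal.ofReal (lm f' k * φs (p (k - 1)))
        ≤ eLpNorm f' ⊤ μ01 * ENNReal.ofReal (limZero φs)
          + ∑' j : ℕ, ENNReal.ofReal (la f' (j+1) * Dfun φs j) := abel_bound hφs hf' hcase
      _ ≤ A + 4 * B := by
          apply add_le_add
          · rw [hAdef, hEeq]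
          · calc ∑' j : ℕ, ENNReal.ofReal (la f' (j+1) * Dfun φs j)
                ≤ 4 * ∫⁻ t in Set.Ioc (0:ℝ) 1,
                    ENNReal.ofReal (decRearr f' t * deriv φs t) := lambda2_bound hφs hf'
              _ = 4 * B := by rw [hBdef, hdec]
  calc QANorm φ ψ f ≤ seqCost φ ψ g := hQ
    _ ≤ (∑' k : ℕ, 2 * ENNReal.ofReal (lm f' k * φs (τ k)))
        + 2 * (ENNReal.ofReal δ * ∑' k : ℕ, ENNReal.ofReal (p k)) := hcost
    _ = 2 * (∑' k : ℕ, ENNReal.ofReal (lm f' k * φs (τ k))) + 2 * (ENNReal.ofReal δ * 2) := by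
        rw [ENNReal.tsum_mul_left, hgeo]
    _ ≤ 2 * (A + 4 * B) + (ε' : ℝ≥0∞) := by
        rw [hεtot]
        exact add_le_add_left (mul_le_mul_right hmain' 2) _
    _ ≤ ENNReal.ofReal 8 * lorentzNorm φs f + (ε' : ℝ≥0∞) := by
        have hlor : lorentzNorm φs f = A + B := by rw [hAdef, hBdef]; rfl
        rw [ENNReal.ofReal_ofNat, hlor]
        apply add_le_add_left
        calc 2 * (A + 4 * B) = 2 * A + 8 * B := by ring
          _ ≤ 8 * A + 8 * B :=
            add_le_add (mul_le_mul_left (by norm_num : (2:ℝ≥0∞) ≤ 8) A) le_rfl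
          _ = 8 * (A + B) := by ring
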